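/- arXiv:1911.02296 — 4 statements merged into one kernel-verified Lean document; each statement's English description precedes it below -/
import Mathlib

section
/- Let (Ω, 𝓕, P) be a probability space, t₀ > 0, and let n : [0, t₀] → Ω → ℝ be a stochastic process such that for every ω ∈ Ω the path t ↦ n_t(ω) is antitone (nonincreasing) and nonnegative, each n_t is integrable, and the function m(t) := E[n_t] is continuous and strictly positive on [0, t₀]. Then for every ε ∈ (0,1) there exists a finite set I ⊆ [0, t₀] such that P( { ω : ∀ t ∈ [0, t₀], n_t(ω) ≤ (1−ε)⁻² · m(t) } ) ≥ P( { ω : ∀ s ∈ I, n_s(ω) ≤ (1−ε)⁻¹ · m(s) } ). In fact the second event is contained in the first. -/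
open MeasureTheory

/-- Estimating the probability of a deviation of the survivor process `n` from its
expectation `m` over all of `[0,t₀]` by the probability of a larger deviation over a
finite set of time points.  The event on the finite set of times is contained in the
event over the whole interval, whence the probability inequality. -/
theorem stmt_1 {Ω : Type*} [MeasurableSpace Ω] (P : Measure Ω) [IsProbabilityMeasure P]
    (t₀ : ℝ) (ht₀ : 0 < t₀) (n : ℝ → Ω → ℝ)
    (hpath : ∀ ω, AntitoneOn (fun t => n t ω) (Set.Icc 0 t₀))
    (hnonneg : ∀ ω, ∀ t ∈ Set.Icc (0:ℝ) t₀, 0 ≤ n t ω)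
    (hint : ∀ t ∈ Set.Icc (0:ℝ) t₀, Integrable (n t) P)
    (m : ℝ → ℝ) (hm : ∀ t ∈ Set.Icc (0:ℝ) t₀, m t = ∫ ω, n t ω ∂P)
    (hmcont : ContinuousOn m (Set.Icc 0 t₀))
    (hmpos : ∀ t ∈ Set.Icc (0:ℝ) t₀, 0 < m t)
    (ε : ℝ) (hε : ε ∈ Set.Ioo (0:ℝ) 1) :
    ∃ I : Finset ℝ, (↑I ⊆ Set.Icc (0:ℝ) t₀) ∧
      {ω | ∀ s ∈ I, n s ω ≤ (1 - ε)⁻¹ * m s} ⊆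
        {ω | ∀ t ∈ Set.Icc (0:ℝ) t₀, n t ω ≤ ((1 - ε)⁻¹) ^ 2 * m t} ∧
      P {ω | ∀ s ∈ I, n s ω ≤ (1 - ε)⁻¹ * m s} ≤
        P {ω | ∀ t ∈ Set.Icc (0:ℝ) t₀, n t ω ≤ ((1 - ε)⁻¹) ^ 2 * m t} := by
  obtain ⟨hε0, hε1⟩ := hε
  have h1ε : (0:ℝ) < 1 - ε := by linarith
  -- minimum of m
  obtain ⟨t₁, ht₁, hminOn⟩ : ∃ t₁ ∈ Set.Icc (0:ℝ) t₀, IsMinOn m (Set.Icc 0 t₀) t₁ :=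
    isCompact_Icc.exists_isMinOn ⟨0, by constructor <;> linarith⟩ hmcont
  have hmin : ∀ t ∈ Set.Icc (0:ℝ) t₀, m t₁ ≤ m t := fun t ht => hminOn ht
  set c := m t₁ with hc
  have hcpos : 0 < c := hmpos t₁ ht₁
  -- uniform continuity
  have huc : UniformContinuousOn m (Set.Icc 0 t₀) :=
    isCompact_Icc.uniformContinuousOn_of_continuous hmcont
  have hη : 0 < ε * c / (1 - ε) := by positivity
  obtain ⟨δ, hδ0, hδ⟩ := (Metric.uniformContinuousOn_iff.mp huc) (ε * c / (1 - ε)) hη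
  -- choose N
  obtain ⟨N, hN⟩ := exists_nat_gt (t₀ / δ)
  have hN0 : 0 < (N:ℝ) := lt_of_le_of_lt (by positivity) hN
  set h := t₀ / N with hh
  have hhpos : 0 < h := by positivity
  have hhδ : h < δ := by
    rw [hh, div_lt_iff₀ hN0]
    calc t₀ = (t₀ / δ) * δ := by field_simp
    _ < N * δ := by apply mul_lt_mul_of_pos_right hN hδ0
    _ = δ * N := mul_comm _ _
  have hsub : {ω | ∀ s ∈ (Finset.range (N+1)).image (fun k : ℕ => (k:ℝ) * h),
      n s ω ≤ (1 - ε)⁻¹ * m s} ⊆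
      {ω | ∀ t ∈ Set.Icc (0:ℝ) t₀, n t ω ≤ ((1 - ε)⁻¹) ^ 2 * m t} := by
    intro ω hω t ht
    simp only [Set.mem_setOf_eq] at hω ⊢
    obtain ⟨ht0, htt₀⟩ := ht
    set k := ⌊t / h⌋₊ with hk
    set s := (k:ℝ) * h with hs
    have hkle : (k:ℝ) ≤ t / h := Nat.floor_le (by positivity)
    have hst : s ≤ t := by
      rw [hs]
      calc (k:ℝ) * h ≤ (t / h) * h := by nlinarith
      _ = t := by field_simp
    have hts : t < s + h := by
      have := Nat.lt_floor_add_one (t / h)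
      rw [hs]
      calc t = (t / h) * h := by field_simp
      _ < ((k:ℝ) + 1) * h := by nlinarith
      _ = (k:ℝ) * h + h := by ring
    have hkN : k ≤ N := by
      have : t / h ≤ (N:ℝ) := by
        rw [div_le_iff₀ hhpos]
        calc t ≤ t₀ := htt₀
        _ = N * h := by rw [hh]; field_simp [hN0.ne']
      calc k = ⌊t / h⌋₊ := rfl
      _ ≤ ⌊(N:ℝ)⌋₊ := Nat.floor_le_floor this
      _ = N := Nat.floor_natCast N
    have hsI : s ∈ (Finset.range (N+1)).image (fun k : ℕ => (k:ℝ) * h) := by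
      apply Finset.mem_image_of_mem
      exact Finset.mem_range.mpr (Nat.lt_succ_of_le hkN)
    have hs0 : 0 ≤ s := by positivity
    have hsIcc : s ∈ Set.Icc (0:ℝ) t₀ := ⟨hs0, le_trans hst htt₀⟩
    have htIcc : t ∈ Set.Icc (0:ℝ) t₀ := ⟨ht0, htt₀⟩
    -- antitone
    have h1 : n t ω ≤ n s ω := hpath ω hsIcc htIcc hst
    have h2 : n s ω ≤ (1 - ε)⁻¹ * m s := hω s hsI
    -- m s ≤ (1-ε)⁻¹ * m t
    have hdist : dist s t < δ := by
      rw [Real.dist_eq, abs_sub_lt_iff]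
      constructor <;> linarith
    have h3 : dist (m s) (m t) < ε * c / (1 - ε) := hδ s hsIcc t htIcc hdist
    have hct : c ≤ m t := hmin t htIcc
    have h4 : m s ≤ (1 - ε)⁻¹ * m t := by
      rw [Real.dist_eq, abs_sub_lt_iff] at h3
      have h5 : m s - m t < ε * m t / (1 - ε) := by
        calc m s - m t < ε * c / (1 - ε) := h3.1
        _ ≤ ε * m t / (1 - ε) := by
          apply div_le_div_of_nonneg_right _ h1ε.le
          nlinarith
      rw [inv_mul_eq_div, le_div_iff₀ h1ε]
      have hcancel : ε * m t / (1 - ε) * (1 - ε) = ε * m t :=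
        div_mul_cancel₀ _ h1ε.ne'
      nlinarith [mul_lt_mul_of_pos_right h5 h1ε]
    calc n t ω ≤ n s ω := h1
    _ ≤ (1 - ε)⁻¹ * m s := h2
    _ ≤ (1 - ε)⁻¹ * ((1 - ε)⁻¹ * m t) := by
        apply mul_le_mul_of_nonneg_left h4 (by positivity)
    _ = ((1 - ε)⁻¹) ^ 2 * m t := by ring
  refine ⟨(Finset.range (N+1)).image (fun k : ℕ => (k:ℝ) * h), ?_, hsub, measure_mono hsub⟩
  intro x hx
  simp only [Finset.coe_image, Set.mem_image, Finset.mem_coe, Finset.mem_range] at hx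
  obtain ⟨k, hk, rfl⟩ := hx
  have hk' : (k:ℝ) ≤ N := by exact_mod_cast Nat.lt_succ_iff.mp hk
  constructor
  · positivity
  · calc (k:ℝ) * h ≤ N * h := by nlinarith
    _ = t₀ := by rw [hh]; field_simp [hN0.ne']
end

section
/- Let u : ℝ → ℝ ∪ {−∞} be concave and increasing, not identically −∞, with γ_min := inf{x : u(x) > −∞} finite, and assume that for every p > 0 there exists x ∈ ℝ with p ∈ ∂u(x). Then u†(p) → γ_min as p → ∞. -/
open MeasureTheory Filter

noncomputable section

/-- The superdifferential of a concave `ℝ ∪ {−∞}`-valued function at `x`. -/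
def SupDiff (g : ℝ → EReal) (x : ℝ) : Set ℝ :=
  {p : ℝ | ∀ y : ℝ, g y ≤ g x + ((p * (y - x) : ℝ) : EReal)}

/-- `g†(p) = inf {x : p ∈ ∂g(x)}`. -/
noncomputable def dagger (g : ℝ → EReal) (p : ℝ) : ℝ :=
  sInf {x : ℝ | p ∈ SupDiff g x}

/-- Concavity of an `ℝ ∪ {−∞}`-valued function. -/
def ERealConcave (g : ℝ → EReal) : Prop :=
  ∀ x y t : ℝ, 0 ≤ t → t ≤ 1 →
    (t : EReal) * g x + ((1 - t : ℝ) : EReal) * g y ≤ g (t * x + (1 - t) * y)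

/-- The standard normal cumulative distribution function. -/
def stdNormalCDF (x : ℝ) : ℝ :=
  ∫ t in Set.Iic x, Real.exp (-t ^ 2 / 2) / Real.sqrt (2 * Real.pi)

/-- The inverse of the standard normal CDF (on `(0,1)`). -/
def stdNormalCDFInv : ℝ → ℝ := Function.invFun stdNormalCDF

/-- The pricing density `q(s) = exp(−M²/2 − M·Φ⁻¹(s))` of the abstract one-period
Black–Scholes–Merton market. -/
def priceDensity (M s : ℝ) : ℝ := Real.exp (-M ^ 2 / 2 - M * stdNormalCDFInv s)

/-- The optimal payoff `f^η(s) = v†(η·s₀^{C−1}·e^{−r·δt}·q(s))`. -/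
def fEta (v : ℝ → EReal) (M s₀ r δt C η s : ℝ) : ℝ :=
  dagger v (η * s₀ ^ (C - 1) * Real.exp (-(r * δt)) * priceDensity M s)

/-- The integral `∫₀¹ (1 + v(f^η(s))) ds`. -/
def intV (v : ℝ → EReal) (M s₀ r δt C η : ℝ) : ℝ :=
  ∫ s in Set.Ioo (0:ℝ) 1, (1 + (v (fEta v M s₀ r δt C η s)).toReal)

/-- The optimal consumption `γ^η`. -/
def gammaEta (u v : ℝ → EReal) (M s₀ r δt C η : ℝ) : ℝ :=
  dagger u (-(η / δt) * (-1 + s₀ * intV v M s₀ r δt C η)⁻¹)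

/-- The budget `X^η = γ^η + s₀^C ∫₀¹ e^{−r·δt} q(s) f^η(s) ds`. -/
def XEta (u v : ℝ → EReal) (M s₀ r δt C η : ℝ) : ℝ :=
  gammaEta u v M s₀ r δt C η +
    s₀ ^ C * ∫ s in Set.Ioo (0:ℝ) 1,
      Real.exp (-(r * δt)) * priceDensity M s * fEta v M s₀ r δt C η s

/-- For a concave increasing utility `u : ℝ → ℝ ∪ {−∞}`, not identically `−∞`, with
`γ_min = inf {x : u(x) > −∞}` finite, and such that every `p > 0` is a supergradient
of `u` at some point, `u†(p) → γ_min` as `p → ∞`. -/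
theorem stmt_8
    (u : ℝ → EReal) (huconc : ERealConcave u) (humono : Monotone u)
    (hutop : ∀ x, u x ≠ ⊤)
    (hne : {x : ℝ | u x ≠ ⊥}.Nonempty) (hbdd : BddBelow {x : ℝ | u x ≠ ⊥})
    (husupp : ∀ p : ℝ, 0 < p → ∃ x : ℝ, p ∈ SupDiff u x) :
    Tendsto (dagger u) atTop (nhds (sInf {x : ℝ | u x ≠ ⊥})) := by
  set S := {x : ℝ | u x ≠ ⊥} with hS
  set γ := sInf S with hγ
  -- any point with a supergradient has finite u
  have hmem : ∀ p x, p ∈ SupDiff u x → u x ≠ ⊥ := by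
    intro p x hp hbot
    obtain ⟨y, hy⟩ := hne
    have h := hp y
    rw [hbot] at h
    simp only [EReal.bot_add, le_bot_iff] at h
    exact hy h
  have hTsub : ∀ p : ℝ, {x : ℝ | p ∈ SupDiff u x} ⊆ S := fun p x hx => hmem p x hx
  have hTbdd : ∀ p : ℝ, BddBelow {x : ℝ | p ∈ SupDiff u x} :=
    fun p => hbdd.mono (hTsub p)
  have hlow : ∀ p : ℝ, 0 < p → γ ≤ dagger u p := by
    intro p hp
    obtain ⟨x, hx⟩ := husupp p hp
    exact le_csInf ⟨x, hx⟩ (fun y hy => csInf_le hbdd (hTsub p hy))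
  -- finiteness above γ
  have hfin : ∀ z : ℝ, γ < z → ∃ r : ℝ, u z = (r : EReal) := by
    intro z hz
    obtain ⟨y, hyS, hyz⟩ := exists_lt_of_csInf_lt hne hz
    have hb : u z ≠ ⊥ := by
      intro h
      exact hyS (le_bot_iff.mp (h ▸ humono hyz.le))
    exact ⟨(u z).toReal, (EReal.coe_toReal (hutop z) hb).symm⟩
  rw [tendsto_order]
  constructor
  · intro a' ha'
    filter_upwards [eventually_gt_atTop 0] with p hp
    exact lt_of_lt_of_le ha' (hlow p hp)
  · intro b hb
    set a := (γ + b) / 2 with ha_def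
    have hγa : γ < a := by rw [ha_def]; linarith
    have hab : a < b := by rw [ha_def]; linarith
    obtain ⟨A, hA⟩ := hfin a hγa
    obtain ⟨B, hB⟩ := hfin b (hγa.trans hab)
    set P := max ((B - A) / (b - a)) 0 + 1 with hP
    filter_upwards [eventually_ge_atTop P] with p hp
    have hp0 : 0 < p := lt_of_lt_of_le (by positivity) hp
    obtain ⟨x, hx⟩ := husupp p hp0
    have hxb : x < b := by
      by_contra hcon
      push_neg at hcon
      obtain ⟨X, hX⟩ := hfin x (lt_of_lt_of_le (hγa.trans hab) hcon)
      have h1 := hx a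
      rw [hA, hX] at h1
      have h1' : A ≤ X + p * (a - x) := by exact_mod_cast h1
      have hslope : X - A ≤ (B - A) * ((x - a) / (b - a)) := by
        rcases eq_or_lt_of_le hcon with heq | hlt
        · have hXB : X = B := by
            have : (X : EReal) = (B : EReal) := by rw [← hX, ← hB, heq]
            exact_mod_cast this
          have hd : (x - a) / (b - a) = 1 := by rw [← heq]; exact div_self (by linarith)
          rw [hd, hXB]; nlinarith [sq_nonneg (B - A)]
        · set t := (b - a) / (x - a) with ht_def
          have hx_a : (0:ℝ) < x - a := by linarith
          have hba : (0:ℝ) < b - a := by linarith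
          have ht0 : 0 < t := div_pos hba hx_a
          have ht1 : t < 1 := (div_lt_one hx_a).2 (by linarith)
          have hc := huconc x a t ht0.le ht1.le
          have hpt : t * x + (1 - t) * a = b := by
            rw [ht_def]; field_simp; ring
          rw [hpt, hA, hX, hB] at hc
          have hc' : t * X + (1 - t) * A ≤ B := by exact_mod_cast hc
          have key : t * (X - A) ≤ B - A := by nlinarith
          have h2 : (0:ℝ) < (x - a) / (b - a) := div_pos hx_a hba
          have h3 : t * ((x - a) / (b - a)) = 1 := by
            rw [ht_def]; field_simp
          have h4 := mul_le_mul_of_nonneg_right key h2.le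
          calc X - A = t * ((x - a) / (b - a)) * (X - A) := by rw [h3, one_mul]
            _ = t * (X - A) * ((x - a) / (b - a)) := by ring
            _ ≤ (B - A) * ((x - a) / (b - a)) := h4
      have hxa : (0:ℝ) < x - a := by linarith
      have hba : (0:ℝ) < b - a := by linarith
      have hple : p ≤ (B - A) / (b - a) := by
        have hstep : p * (x - a) ≤ (B - A) * ((x - a) / (b - a)) := by nlinarith
        have h6 : p * (x - a) ≤ (B - A) / (b - a) * (x - a) := by
          calc p * (x - a) ≤ (B - A) * ((x - a) / (b - a)) := hstep
            _ = (B - A) / (b - a) * (x - a) := by ring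
        exact (mul_le_mul_iff_of_pos_right hxa).mp h6
      have : p < P := by
        have := le_max_left ((B - A) / (b - a)) 0
        rw [hP]; linarith
      linarith
    have hd : dagger u p ≤ x := csInf_le (hTbdd p) hx
    exact lt_of_le_of_lt hd hxb

end
end

section
/- Define g : (0, λ) → ℝ by g(W) = (1/k)·(1−k)^{1−1/k}·a^{−1/k}·(c+λ)^{1/k − 1}·W^{(1−k)/k}·(λ−W)^{−1/k}. Then: (i) g is positive and integrable near 0, and x(w) := ∫₀^w g(W) dW defines a strictly increasing differentiable map from (0, λ) onto (0, L), where L := sup_{w ∈ (0,λ)} x(w) ∈ (0, ∞]; (ii) its inverse w : (0, L) → (0, λ) is differentiable, and the function v̂(y) := (w(y) − λ)/(c+λ) satisfies −λ/(c+λ) < v̂(y) < 0 and the ordinary differential equation a·k·( ((c+λ)·v̂(y) + λ)/(a·(k−1)·v̂(y)) )^{(k−1)/k} = −v̂′(y)/v̂(y) for all y ∈ (0, L), with v̂(y) → −λ/(c+λ) as y → 0⁺. -/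
open MeasureTheory Filter

noncomputable section

/-- The integrand `g(W)` whose antiderivative expresses wealth as a function of the
transformed value `W = (c+λ)·v̂ + λ`. -/
def gFun (a k c lam : ℝ) (W : ℝ) : ℝ :=
  1 / k * (1 - k) ^ (1 - 1 / k) * a ^ (-(1 / k)) * (c + lam) ^ (1 / k - 1) *
    W ^ ((1 - k) / k) * (lam - W) ^ (-(1 / k))

/-- The wealth `x(w) = ∫₀^w g(W) dW`. -/
def XFun (a k c lam : ℝ) (w : ℝ) : ℝ :=
  ∫ W in Set.Ioo (0:ℝ) w, gFun a k c lam W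

/-- `L = sup_{w ∈ (0,λ)} x(w) ∈ (0,∞]`, as an extended real. -/
def LSup (a k c lam : ℝ) : EReal :=
  ⨆ w ∈ Set.Ioo (0:ℝ) lam, ((XFun a k c lam w : ℝ) : EReal)

open Classical in
/-- Inverse of `XFun` on the interval `(0, L)`. -/
def Wfun (a k c lam : ℝ) (y : ℝ) : ℝ :=
  if h : ∃ x ∈ Set.Ioo (0:ℝ) lam, XFun a k c lam x = y then h.choose else 0

section AuxLemmas

variable {a k lam c : ℝ}

theorem gpos (ha : 0 < a) (hk0 : 0 < k) (hk1 : k < 1) (hcl : 0 < c + lam) :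
    ∀ W ∈ Set.Ioo (0:ℝ) lam, 0 < gFun a k c lam W := by
  intro W hW
  obtain ⟨h1, h2⟩ := hW
  have h3 : 0 < lam - W := by linarith
  have h4 : (0:ℝ) < 1 - k := by linarith
  unfold gFun
  positivity

theorem gcont (ha : 0 < a) (hk0 : 0 < k) (hk1 : k < 1) :
    ContinuousOn (gFun a k c lam) (Set.Ico 0 lam) := by
  intro W hW
  apply ContinuousAt.continuousWithinAt
  have h1 : ContinuousAt (fun W : ℝ => W ^ ((1 - k) / k)) W := by
    apply Real.continuousAt_rpow_const
    right; exact le_of_lt (div_pos (by linarith) hk0)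
  have h2 : ContinuousAt (fun W : ℝ => (lam - W) ^ (-(1 / k))) W := by
    have : ContinuousAt (fun x : ℝ => x ^ (-(1 / k))) (lam - W) := by
      apply Real.continuousAt_rpow_const
      left; exact ne_of_gt (by linarith [hW.2, hW.1])
    exact this.comp (continuousAt_const.sub continuousAt_id)
  unfold gFun
  exact ((continuousAt_const.mul h1).mul h2)

theorem gint (ha : 0 < a) (hk0 : 0 < k) (hk1 : k < 1) :
    ∀ w ∈ Set.Ioo (0:ℝ) lam, IntegrableOn (gFun a k c lam) (Set.Ioo 0 w) := by
  intro w hw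
  have h : Set.Icc (0:ℝ) w ⊆ Set.Ico 0 lam := fun x hx => ⟨hx.1, lt_of_le_of_lt hx.2 hw.2⟩
  exact (((gcont ha hk0 hk1).mono h).integrableOn_compact isCompact_Icc).mono_set
    Set.Ioo_subset_Icc_self

theorem XFun_eq (w : ℝ) (hw : 0 ≤ w) :
    XFun a k c lam w = ∫ t in (0:ℝ)..w, gFun a k c lam t := by
  rw [intervalIntegral.integral_of_le hw, integral_Ioc_eq_integral_Ioo]
  rfl

theorem gii (ha : 0 < a) (hk0 : 0 < k) (hk1 : k < 1) {u v : ℝ} (hu : 0 ≤ u) (huv : u ≤ v)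
    (hv : v < lam) : IntervalIntegrable (gFun a k c lam) volume u v := by
  rw [intervalIntegrable_iff_integrableOn_Icc_of_le huv]
  exact ((gcont ha hk0 hk1).mono (fun x hx => ⟨le_trans hu hx.1, lt_of_le_of_lt hx.2 hv⟩)
    ).integrableOn_compact isCompact_Icc

theorem XhasDeriv (ha : 0 < a) (hk0 : 0 < k) (hk1 : k < 1) :
    ∀ w ∈ Set.Ioo (0:ℝ) lam, HasDerivAt (XFun a k c lam) (gFun a k c lam w) w := by
  intro w hw
  have hF : HasDerivAt (fun u => ∫ t in (0:ℝ)..u, gFun a k c lam t) (gFun a k c lam w) w := by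
    apply intervalIntegral.integral_hasDerivAt_right (gii ha hk0 hk1 le_rfl hw.1.le hw.2)
    · exact ⟨Set.Ico 0 lam, Ico_mem_nhds hw.1 hw.2,
        ((gcont ha hk0 hk1).aestronglyMeasurable measurableSet_Ico)⟩
    · exact ((gcont ha hk0 hk1) w ⟨hw.1.le, hw.2⟩).continuousAt (Ico_mem_nhds hw.1 hw.2)
  apply hF.congr_of_eventuallyEq
  filter_upwards [Ioi_mem_nhds hw.1] with u hu
  exact XFun_eq u (le_of_lt hu)

theorem Xsub (ha : 0 < a) (hk0 : 0 < k) (hk1 : k < 1) {u v : ℝ} (hu : 0 < u) (huv : u ≤ v)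
    (hv : v < lam) :
    XFun a k c lam v - XFun a k c lam u = ∫ t in u..v, gFun a k c lam t := by
  rw [XFun_eq u hu.le, XFun_eq v (hu.le.trans huv)]
  rw [← intervalIntegral.integral_add_adjacent_intervals (gii ha hk0 hk1 le_rfl hu.le (lt_of_le_of_lt huv hv)) (gii ha hk0 hk1 hu.le huv hv)]
  ring

theorem Xmono (ha : 0 < a) (hk0 : 0 < k) (hk1 : k < 1) (hcl : 0 < c + lam) :
    StrictMonoOn (XFun a k c lam) (Set.Ioo 0 lam) := by
  intro u hu v hv huv
  have h := intervalIntegral.intervalIntegral_pos_of_pos_on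
    (gii ha hk0 hk1 hu.1.le huv.le hv.2)
    (fun x hx => gpos ha hk0 hk1 hcl x ⟨lt_trans hu.1 hx.1, lt_trans hx.2 hv.2⟩) huv
  have := Xsub ha hk0 hk1 hu.1 huv.le hv.2 (c := c)
  linarith

theorem Xpos (ha : 0 < a) (hk0 : 0 < k) (hk1 : k < 1) (hcl : 0 < c + lam) :
    ∀ w ∈ Set.Ioo (0:ℝ) lam, 0 < XFun a k c lam w := by
  intro w hw
  rw [XFun_eq w hw.1.le]
  exact intervalIntegral.intervalIntegral_pos_of_pos_on (gii ha hk0 hk1 le_rfl hw.1.le hw.2)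
    (fun x hx => gpos ha hk0 hk1 hcl x ⟨hx.1, lt_trans hx.2 hw.2⟩) hw.1

theorem Xcont0 (ha : 0 < a) (hk0 : 0 < k) (hk1 : k < 1) (hlam : 0 < lam) :
    ∀ ε > 0, ∃ w ∈ Set.Ioo (0:ℝ) lam, XFun a k c lam w < ε := by
  intro ε hε
  set δ := lam / 2 with hδ
  have hδl : δ ∈ Set.Ioo (0:ℝ) lam := ⟨by linarith, by linarith⟩
  have hint : IntegrableOn (gFun a k c lam) (Set.Icc 0 δ) volume :=
    ((gcont ha hk0 hk1).mono (fun x hx => ⟨hx.1, lt_of_le_of_lt hx.2 hδl.2⟩)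
      ).integrableOn_compact isCompact_Icc
  have hc : ContinuousOn (fun x => ∫ t in Set.Ioc 0 x, gFun a k c lam t) (Set.Icc 0 δ) :=
    intervalIntegral.continuousOn_primitive hint
  have h0 : Tendsto (fun x => ∫ t in Set.Ioc 0 x, gFun a k c lam t)
      (nhdsWithin 0 (Set.Icc 0 δ)) (nhds 0) := by
    have := (hc 0 ⟨le_rfl, hδl.1.le⟩)
    unfold ContinuousWithinAt at this
    simpa [Set.Ioc_self] using this
  have hev := h0.eventually (eventually_lt_nhds hε)
  rw [eventually_nhdsWithin_iff] at hev
  obtain ⟨η, hη, hball⟩ := Metric.eventually_nhds_iff_ball.mp hev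
  set w := min (η/2) (δ/2) with hw
  have hw0 : 0 < w := lt_min (by linarith) (by linarith [hδl.1])
  have hwδ : w ≤ δ/2 := min_le_right _ _
  have hwlam : w < lam := by
    calc w ≤ δ/2 := hwδ
    _ < lam := by simp only [hδ]; linarith
  refine ⟨w, ⟨hw0, hwlam⟩, ?_⟩
  have : XFun a k c lam w = ∫ t in Set.Ioc 0 w, gFun a k c lam t := by
    rw [XFun_eq w hw0.le, intervalIntegral.integral_of_le hw0.le]
  rw [this]
  apply hball
  · simp only [Metric.mem_ball, Real.dist_eq, sub_zero, abs_of_pos hw0]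
    calc w ≤ η/2 := min_le_left _ _
    _ < η := by linarith
  · exact ⟨hw0.le, by linarith [hδl.1]⟩

theorem XleL {w : ℝ} (hw : w ∈ Set.Ioo (0:ℝ) lam) :
    ((XFun a k c lam w : ℝ) : EReal) ≤ LSup a k c lam :=
  le_iSup₂ (f := fun w (_ : w ∈ Set.Ioo (0:ℝ) lam) => ((XFun a k c lam w : ℝ) : EReal)) w hw

theorem XltL (ha : 0 < a) (hk0 : 0 < k) (hk1 : k < 1) (hcl : 0 < c + lam) {w : ℝ}
    (hw : w ∈ Set.Ioo (0:ℝ) lam) :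
    ((XFun a k c lam w : ℝ) : EReal) < LSup a k c lam := by
  have hw' : (w + lam) / 2 ∈ Set.Ioo (0:ℝ) lam := ⟨by linarith [hw.1, hw.2], by linarith [hw.2]⟩
  have h1 : XFun a k c lam w < XFun a k c lam ((w + lam) / 2) :=
    Xmono ha hk0 hk1 hcl hw hw' (by linarith [hw.2])
  exact lt_of_lt_of_le (by exact_mod_cast h1) (XleL hw')

theorem Lpos (ha : 0 < a) (hk0 : 0 < k) (hk1 : k < 1) (hlam : 0 < lam) (hcl : 0 < c + lam) :
    (0 : EReal) < LSup a k c lam := by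
  have hw : lam / 2 ∈ Set.Ioo (0:ℝ) lam := ⟨by linarith, by linarith⟩
  have := Xpos ha hk0 hk1 hcl _ hw
  exact lt_of_lt_of_le (by exact_mod_cast this) (XleL hw)

theorem Ximage (ha : 0 < a) (hk0 : 0 < k) (hk1 : k < 1) (hlam : 0 < lam) (hcl : 0 < c + lam) :
    XFun a k c lam '' Set.Ioo 0 lam =
      {y : ℝ | 0 < y ∧ (y : EReal) < LSup a k c lam} := by
  ext y
  constructor
  · rintro ⟨w, hw, rfl⟩
    exact ⟨Xpos ha hk0 hk1 hcl w hw, XltL ha hk0 hk1 hcl hw⟩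
  · rintro ⟨hy0, hyL⟩
    obtain ⟨w₀, hw₀, hyw₀⟩ : ∃ w₀ ∈ Set.Ioo (0:ℝ) lam, y < XFun a k c lam w₀ := by
      rw [LSup, lt_iSup_iff] at hyL
      obtain ⟨w₀, h⟩ := hyL
      rw [lt_iSup_iff] at h
      obtain ⟨hw₀, h⟩ := h
      exact ⟨w₀, hw₀, by exact_mod_cast h⟩
    obtain ⟨w₁, hw₁, hyw₁⟩ := Xcont0 ha hk0 hk1 hlam y hy0
    have h10 : w₁ ≤ w₀ := by
      by_contra h
      push_neg at h
      have := Xmono ha hk0 hk1 hcl hw₀ hw₁ h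
      linarith
    have hcont : ContinuousOn (XFun a k c lam) (Set.Icc w₁ w₀) := by
      intro x hx
      exact ((XhasDeriv ha hk0 hk1 x ⟨lt_of_lt_of_le hw₁.1 hx.1,
        lt_of_le_of_lt hx.2 hw₀.2⟩).continuousAt).continuousWithinAt
    have := intermediate_value_Icc h10 hcont
    obtain ⟨x, hx, hxy⟩ := this ⟨hyw₁.le, hyw₀.le⟩
    exact ⟨x, ⟨lt_of_lt_of_le hw₁.1 hx.1, lt_of_le_of_lt hx.2 hw₀.2⟩, hxy⟩

theorem Sopen : IsOpen {y : ℝ | 0 < y ∧ (y : EReal) < LSup a k c lam} := by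
  have : {y : ℝ | 0 < y ∧ (y : EReal) < LSup a k c lam}
      = Set.Ioi 0 ∩ (fun y : ℝ => (y : EReal)) ⁻¹' (Set.Iio (LSup a k c lam)) := rfl
  rw [this]
  exact isOpen_Ioi.inter (isOpen_Iio.preimage continuous_coe_real_ereal)

theorem Wspec (ha : 0 < a) (hk0 : 0 < k) (hk1 : k < 1) (hlam : 0 < lam) (hcl : 0 < c + lam)
    {y : ℝ} (hy : y ∈ {y : ℝ | 0 < y ∧ (y : EReal) < LSup a k c lam}) :
    Wfun a k c lam y ∈ Set.Ioo (0:ℝ) lam ∧ XFun a k c lam (Wfun a k c lam y) = y := by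
  have h : ∃ x ∈ Set.Ioo (0:ℝ) lam, XFun a k c lam x = y := by
    rw [← Ximage ha hk0 hk1 hlam hcl] at hy
    obtain ⟨x, hx, hxy⟩ := hy
    exact ⟨x, hx, hxy⟩
  rw [Wfun, dif_pos h]
  exact h.choose_spec

theorem WleftInv (ha : 0 < a) (hk0 : 0 < k) (hk1 : k < 1) (hlam : 0 < lam) (hcl : 0 < c + lam) :
    ∀ x ∈ Set.Ioo (0:ℝ) lam, Wfun a k c lam (XFun a k c lam x) = x := by
  intro x hx
  have hxS : XFun a k c lam x ∈ {y : ℝ | 0 < y ∧ (y : EReal) < LSup a k c lam} := by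
    rw [← Ximage ha hk0 hk1 hlam hcl]; exact ⟨x, hx, rfl⟩
  obtain ⟨hmem, heq⟩ := Wspec ha hk0 hk1 hlam hcl hxS
  exact (Xmono ha hk0 hk1 hcl).injOn hmem hx heq

theorem Wcont (ha : 0 < a) (hk0 : 0 < k) (hk1 : k < 1) (hlam : 0 < lam) (hcl : 0 < c + lam)
    {y : ℝ} (hy : y ∈ {y : ℝ | 0 < y ∧ (y : EReal) < LSup a k c lam}) :
    ContinuousAt (Wfun a k c lam) y := by
  set S := {y : ℝ | 0 < y ∧ (y : EReal) < LSup a k c lam} with hS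
  obtain ⟨hmem, heq⟩ := Wspec ha hk0 hk1 hlam hcl hy
  set w := Wfun a k c lam y with hwdef
  rw [Metric.continuousAt_iff]
  intro ε hε
  set w₁ := max (w - ε/2) (w/2) with hw1
  set w₂ := min (w + ε/2) ((w + lam)/2) with hw2
  have hw0 : 0 < w := hmem.1
  have hwlam : w < lam := hmem.2
  have hw1w : w₁ < w := max_lt (by linarith) (by linarith)
  have hw1pos : 0 < w₁ := lt_of_lt_of_le (by linarith) (le_max_right _ _)
  have hw1ge : w - ε/2 ≤ w₁ := le_max_left _ _
  have hw2w : w < w₂ := lt_min (by linarith) (by linarith)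
  have hw2lam : w₂ < lam := lt_of_le_of_lt (min_le_right _ _) (by linarith)
  have hw2le : w₂ ≤ w + ε/2 := min_le_left _ _
  have hw₁mem : w₁ ∈ Set.Ioo (0:ℝ) lam := ⟨hw1pos, by linarith⟩
  have hw₂mem : w₂ ∈ Set.Ioo (0:ℝ) lam := ⟨by linarith, hw2lam⟩
  have hX1 : XFun a k c lam w₁ < y := by
    have := Xmono ha hk0 hk1 hcl hw₁mem hmem hw1w
    linarith [heq ▸ this]
  have hX2 : y < XFun a k c lam w₂ := by
    have := Xmono ha hk0 hk1 hcl hmem hw₂mem hw2w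
    linarith [heq ▸ this]
  obtain ⟨r, hr, hball⟩ := Metric.isOpen_iff.mp (Sopen (a:=a) (k:=k) (lam:=lam) (c:=c)) y hy
  refine ⟨min r (min (y - XFun a k c lam w₁) (XFun a k c lam w₂ - y)),
    lt_min hr (lt_min (by linarith) (by linarith)), ?_⟩
  intro y' hy'
  have hy'r : dist y' y < r := lt_of_lt_of_le hy' (min_le_left _ _)
  have hy'S : y' ∈ S := hball hy'r
  have hd : |y' - y| < min (y - XFun a k c lam w₁) (XFun a k c lam w₂ - y) :=
    lt_of_lt_of_le (by rwa [Real.dist_eq] at hy') (min_le_right _ _)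
  have h1 : XFun a k c lam w₁ < y' := by
    have := abs_lt.mp (lt_of_lt_of_le hd (min_le_left _ _))
    linarith [this.1]
  have h2 : y' < XFun a k c lam w₂ := by
    have := abs_lt.mp (lt_of_lt_of_le hd (min_le_right _ _))
    linarith [this.2]
  obtain ⟨hmem', heq'⟩ := Wspec ha hk0 hk1 hlam hcl hy'S
  set w' := Wfun a k c lam y' with hw'def
  have hlt1 : w₁ < w' := by
    by_contra h
    push_neg at h
    have := (Xmono ha hk0 hk1 hcl).monotoneOn hmem' hw₁mem h
    rw [heq'] at this
    linarith
  have hlt2 : w' < w₂ := by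
    by_contra h
    push_neg at h
    have := (Xmono ha hk0 hk1 hcl).monotoneOn hw₂mem hmem' h
    rw [heq'] at this
    linarith
  rw [Real.dist_eq, abs_lt]
  constructor <;> [linarith; linarith]

theorem WhasDeriv (ha : 0 < a) (hk0 : 0 < k) (hk1 : k < 1) (hlam : 0 < lam) (hcl : 0 < c + lam)
    {y : ℝ} (hy : y ∈ {y : ℝ | 0 < y ∧ (y : EReal) < LSup a k c lam}) :
    HasDerivAt (Wfun a k c lam) (gFun a k c lam (Wfun a k c lam y))⁻¹ y := by
  obtain ⟨hmem, heq⟩ := Wspec ha hk0 hk1 hlam hcl hy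
  refine HasDerivAt.of_local_left_inverse (Wcont ha hk0 hk1 hlam hcl hy)
    (XhasDeriv ha hk0 hk1 _ hmem) (ne_of_gt (gpos ha hk0 hk1 hcl _ hmem)) ?_
  filter_upwards [(Sopen (a:=a) (k:=k) (lam:=lam) (c:=c)).mem_nhds hy] with y' hy'
  exact (Wspec ha hk0 hk1 hlam hcl hy').2

theorem ode_algebra (ha : 0 < a) (hk0 : 0 < k) (hk1 : k < 1) (hlam : 0 < lam)
    (hcl : 0 < c + lam) {w : ℝ} (hw : w ∈ Set.Ioo (0:ℝ) lam) :
    a * k * (((c + lam) * ((w - lam) / (c + lam)) + lam) /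
        (a * (k - 1) * ((w - lam) / (c + lam)))) ^ ((k - 1) / k) =
      -((gFun a k c lam w)⁻¹ / (c + lam)) / ((w - lam) / (c + lam)) := by
  obtain ⟨hw0, hwlam⟩ := hw
  have hlw : 0 < lam - w := by linarith
  have h1k : (0:ℝ) < 1 - k := by linarith
  set p := (1 - k) / k with hp
  have hppos : 0 < p := div_pos h1k hk0
  set B := a * (1 - k) * (lam - w) / (c + lam) with hB
  have hBpos : 0 < B := by positivity
  have hne1 : c + lam ≠ 0 := ne_of_gt hcl
  have hne1' : lam + c ≠ 0 := by rw [add_comm]; exact hne1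
  have hne2 : w - lam ≠ 0 := by intro h; linarith [sub_eq_zero.mp h]
  have hne3 : a ≠ 0 := ne_of_gt ha
  have hne4 : k - 1 ≠ 0 := by intro h; linarith [sub_eq_zero.mp h]
  have hne5 : lam - w ≠ 0 := ne_of_gt hlw
  have hBne : B ≠ 0 := ne_of_gt hBpos
  -- rewrite base
  have hbase : ((c + lam) * ((w - lam) / (c + lam)) + lam) /
      (a * (k - 1) * ((w - lam) / (c + lam))) = w / B := by
    have hnum : (c + lam) * ((w - lam) / (c + lam)) + lam = w := by
      field_simp
      ring
    have hden : a * (k - 1) * ((w - lam) / (c + lam)) = B := by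
      rw [hB, mul_div_assoc]
      simp only [div_eq_mul_inv]
      ring
    rw [hnum, hden]
  rw [hbase]
  -- rewrite the exponent
  have hexp : (k - 1) / k = -p := by rw [hp]; ring
  rw [hexp]
  -- positivity facts
  have hg : 0 < gFun a k c lam w := gpos ha hk0 hk1 hcl w ⟨hw0, hwlam⟩
  -- RHS simplification target: (gFun * (lam - w))⁻¹
  have hrhs : -((gFun a k c lam w)⁻¹ / (c + lam)) / ((w - lam) / (c + lam))
      = (gFun a k c lam w * (lam - w))⁻¹ := by
    field_simp [hne1, hne2, hg.ne']
    ring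
  rw [hrhs]
  -- expand (w / B) ^ (-p)
  have e1 : (w / B) ^ (-p) = B ^ p * (w ^ p)⁻¹ := by
    rw [Real.rpow_neg (div_pos hw0 hBpos).le, Real.div_rpow hw0.le hBpos.le, inv_div,
      div_eq_mul_inv]
  have e2 : B ^ p = a ^ p * (1 - k) ^ p * (lam - w) ^ p * ((c + lam) ^ p)⁻¹ := by
    rw [hB, Real.div_rpow (by positivity) hcl.le, Real.mul_rpow (by positivity) hlw.le,
      Real.mul_rpow ha.le h1k.le, div_eq_mul_inv]
  -- expand gFun
  have ek1 : (1:ℝ) - 1 / k = -p := by rw [hp]; field_simp; ring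
  have ek2 : 1 / k - 1 = p := by rw [hp]; field_simp
  have ek3 : (1 - k) / k = p := hp.symm
  have ek4 : -(1 / k) = -(p + 1) := by rw [hp]; field_simp; ring
  have eg : gFun a k c lam w = 1 / k * ((1 - k) ^ p)⁻¹ * (a ^ p * a)⁻¹ * (c + lam) ^ p *
      w ^ p * ((lam - w) ^ p * (lam - w))⁻¹ := by
    rw [gFun, ek1, ek2, ek3, ek4]
    rw [Real.rpow_neg h1k.le, Real.rpow_neg ha.le, Real.rpow_neg hlw.le,
      Real.rpow_add ha, Real.rpow_add hlw, Real.rpow_one, Real.rpow_one]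
  rw [eg, e1, e2]
  have p1 : (0:ℝ) < (1 - k) ^ p := Real.rpow_pos_of_pos h1k p
  have p2 : (0:ℝ) < a ^ p := Real.rpow_pos_of_pos ha p
  have p3 : (0:ℝ) < (c + lam) ^ p := Real.rpow_pos_of_pos hcl p
  have p4 : (0:ℝ) < w ^ p := Real.rpow_pos_of_pos hw0 p
  have p5 : (0:ℝ) < (lam - w) ^ p := Real.rpow_pos_of_pos hlw p
  field_simp

theorem Wtendsto0 (ha : 0 < a) (hk0 : 0 < k) (hk1 : k < 1) (hlam : 0 < lam) (hcl : 0 < c + lam) :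
    Tendsto (Wfun a k c lam)
      (nhdsWithin 0 {y : ℝ | 0 < y ∧ (y : EReal) < LSup a k c lam}) (nhds 0) := by
  rw [Metric.tendsto_nhdsWithin_nhds]
  intro ε hε
  set ε' := min (ε/2) (lam/2) with hε'
  have hε'mem : ε' ∈ Set.Ioo (0:ℝ) lam := ⟨lt_min (by linarith) (by linarith),
    lt_of_le_of_lt (min_le_right _ _) (by linarith)⟩
  refine ⟨XFun a k c lam ε', Xpos ha hk0 hk1 hcl ε' hε'mem, ?_⟩
  intro y hy hdy
  obtain ⟨hmem, heq⟩ := Wspec ha hk0 hk1 hlam hcl hy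
  have hylt : y < XFun a k c lam ε' := by
    rw [Real.dist_eq, sub_zero, abs_of_pos hy.1] at hdy
    exact hdy
  have hWlt : Wfun a k c lam y < ε' := by
    by_contra h
    push_neg at h
    have := (Xmono ha hk0 hk1 hcl).monotoneOn hε'mem hmem h
    rw [heq] at this
    linarith
  rw [Real.dist_eq, sub_zero, abs_of_pos hmem.1]
  exact lt_of_lt_of_le hWlt (le_trans (min_le_left _ _) (by linarith))

theorem vTendsto (ha : 0 < a) (hk0 : 0 < k) (hk1 : k < 1) (hlam : 0 < lam) (hcl : 0 < c + lam) :
    Tendsto (fun y => (Wfun a k c lam y - lam) / (c + lam))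
      (nhdsWithin 0 {y : ℝ | 0 < y ∧ (y : EReal) < LSup a k c lam})
      (nhds (-lam / (c + lam))) := by
  have h := ((Wtendsto0 ha hk0 hk1 hlam hcl).sub_const lam).div_const (c + lam)
  simpa using h

end AuxLemmas

/-- Construction of the value function of the "mattress" problem: (i) `g` is
positive and integrable near `0`, and `x(w) = ∫₀^w g` is a strictly increasing
differentiable map from `(0,λ)` onto `(0,L)`, `L = sup x ∈ (0,∞]`; (ii) its inverse
`w : (0,L) → (0,λ)` is differentiable and `v̂(y) = (w(y) − λ)/(c+λ)` satisfies
`−λ/(c+λ) < v̂ < 0`, the first-order ODE of the stationary HJB equation, and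
`v̂(y) → −λ/(c+λ)` as `y → 0⁺`. -/
theorem stmt_16 (a k lam c : ℝ) (ha : 0 < a) (hk0 : 0 < k) (hk1 : k < 1)
    (hlam : 0 < lam) (hcl : 0 < c + lam) :
    -- (i)
    (∀ W ∈ Set.Ioo (0:ℝ) lam, 0 < gFun a k c lam W) ∧
    (∃ δ ∈ Set.Ioo (0:ℝ) lam, IntegrableOn (gFun a k c lam) (Set.Ioo 0 δ)) ∧
    (∀ w ∈ Set.Ioo (0:ℝ) lam, IntegrableOn (gFun a k c lam) (Set.Ioo 0 w)) ∧
    StrictMonoOn (XFun a k c lam) (Set.Ioo 0 lam) ∧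
    (∀ w ∈ Set.Ioo (0:ℝ) lam, HasDerivAt (XFun a k c lam) (gFun a k c lam w) w) ∧
    (0 : EReal) < LSup a k c lam ∧
    XFun a k c lam '' Set.Ioo 0 lam =
      {y : ℝ | 0 < y ∧ (y : EReal) < LSup a k c lam} ∧
    -- (ii)
    ∃ W : ℝ → ℝ,
      (∀ y : ℝ, 0 < y → (y : EReal) < LSup a k c lam →
        W y ∈ Set.Ioo 0 lam ∧ XFun a k c lam (W y) = y ∧
        DifferentiableAt ℝ W y ∧
        (-lam / (c + lam) < (W y - lam) / (c + lam) ∧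
          (W y - lam) / (c + lam) < 0) ∧
        a * k * (((c + lam) * ((W y - lam) / (c + lam)) + lam) /
            (a * (k - 1) * ((W y - lam) / (c + lam)))) ^ ((k - 1) / k) =
          -(deriv (fun z => (W z - lam) / (c + lam)) y) /
            ((W y - lam) / (c + lam))) ∧
      (∀ x ∈ Set.Ioo (0:ℝ) lam, W (XFun a k c lam x) = x) ∧
      Tendsto (fun y => (W y - lam) / (c + lam))
        (nhdsWithin 0 {y : ℝ | 0 < y ∧ (y : EReal) < LSup a k c lam})
        (nhds (-lam / (c + lam))) := by
  refine ⟨gpos ha hk0 hk1 hcl,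
    ⟨lam / 2, ⟨by linarith, by linarith⟩, gint ha hk0 hk1 (lam / 2) ⟨by linarith, by linarith⟩⟩,
    gint ha hk0 hk1, Xmono ha hk0 hk1 hcl, XhasDeriv ha hk0 hk1,
    Lpos ha hk0 hk1 hlam hcl, Ximage ha hk0 hk1 hlam hcl,
    Wfun a k c lam, ?_, WleftInv ha hk0 hk1 hlam hcl, vTendsto ha hk0 hk1 hlam hcl⟩
  intro y hy0 hyL
  have hyS : y ∈ {y : ℝ | 0 < y ∧ (y : EReal) < LSup a k c lam} := ⟨hy0, hyL⟩
  obtain ⟨hmem, heq⟩ := Wspec ha hk0 hk1 hlam hcl hyS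
  have hW := WhasDeriv ha hk0 hk1 hlam hcl hyS
  have hdv : HasDerivAt (fun z => (Wfun a k c lam z - lam) / (c + lam))
      ((gFun a k c lam (Wfun a k c lam y))⁻¹ / (c + lam)) y :=
    (hW.sub_const lam).div_const (c + lam)
  refine ⟨hmem, heq, hW.differentiableAt, ⟨?_, ?_⟩, ?_⟩
  · apply div_lt_div_of_pos_right ?_ hcl
    · linarith [hmem.1]
  · exact div_neg_of_neg_of_pos (by linarith [hmem.2]) hcl
  · rw [hdv.deriv]
    exact ode_algebra ha hk0 hk1 hlam hcl hmem

end
end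

section
/- Let I ⊆ (0, ∞) be an open interval and let v̂ : I → ℝ be differentiable with v̂ < 0 and (c+λ)·v̂ + λ > 0 on I, satisfying the ordinary differential equation a·k·( ((c+λ)·v̂(x) + λ)/(a·(k−1)·v̂(x)) )^{(k−1)/k} = −v̂′(x)/v̂(x) for all x ∈ I. Define the optimal consumption γ*(x) = ( ((c+λ)·v̂(x) + λ)/(a·(k−1)·v̂(x)) )^{1/k}. If x : [0, T) → I is differentiable with x′(t) = −γ*(x(t)) for all t ∈ [0, T), then the function w(t) := (c+λ)·v̂(x(t)) + λ satisfies w′(t) = (c+λ)·(k/(k−1))·w(t) for all t, and consequently w(t) = w(0)·exp( k·(c+λ)·t/(k−1) ) for all t ∈ [0, T). -/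
/-- Dynamics of the transformed value along the optimal wealth trajectory: if `v̂`
satisfies the stationary HJB ODE on an open interval `I ⊆ (0,∞)` and the wealth
`x(t)` follows `x′ = −γ*(x)` with `γ*(x) = (((c+λ)v̂(x)+λ)/(a(k−1)v̂(x)))^{1/k}`, then
`w(t) = (c+λ)·v̂(x(t)) + λ` satisfies `w′ = (c+λ)·(k/(k−1))·w`, hence
`w(t) = w(0)·exp(k·(c+λ)·t/(k−1))`. -/
theorem stmt_17 (a k lam c : ℝ) (ha : 0 < a) (hk0 : 0 < k) (hk1 : k < 1)
    (hlam : 0 < lam) (hcl : 0 < c + lam)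
    (A B : ℝ) (hA : 0 ≤ A)
    (vhat : ℝ → ℝ)
    (hdiff : ∀ y ∈ Set.Ioo A B, DifferentiableAt ℝ vhat y)
    (hneg : ∀ y ∈ Set.Ioo A B, vhat y < 0)
    (hpos : ∀ y ∈ Set.Ioo A B, 0 < (c + lam) * vhat y + lam)
    (hODE : ∀ y ∈ Set.Ioo A B,
      a * k * (((c + lam) * vhat y + lam) / (a * (k - 1) * vhat y)) ^ ((k - 1) / k) =
        -(deriv vhat y) / vhat y)
    (T : ℝ) (x : ℝ → ℝ)
    (hxI : ∀ t ∈ Set.Ico (0:ℝ) T, x t ∈ Set.Ioo A B)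
    (hx : ∀ t ∈ Set.Ico (0:ℝ) T,
      HasDerivAt x
        (-(((c + lam) * vhat (x t) + lam) / (a * (k - 1) * vhat (x t))) ^ (1 / k)) t) :
    ∀ t ∈ Set.Ico (0:ℝ) T,
      HasDerivAt (fun s => (c + lam) * vhat (x s) + lam)
        ((c + lam) * (k / (k - 1)) * ((c + lam) * vhat (x t) + lam)) t ∧
      (c + lam) * vhat (x t) + lam =
        ((c + lam) * vhat (x 0) + lam) * Real.exp (k * (c + lam) * t / (k - 1)) := by
  have hk : k ≠ 0 := ne_of_gt hk0
  have hk1' : k - 1 ≠ 0 := by linarith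
  have haz : a ≠ 0 := ne_of_gt ha
  set D : ℝ := (c + lam) * (k / (k - 1)) with hD
  -- Step 1: the derivative of w
  have hw : ∀ t ∈ Set.Ico (0:ℝ) T,
      HasDerivAt (fun s => (c + lam) * vhat (x s) + lam)
        (D * ((c + lam) * vhat (x t) + lam)) t := by
    intro t ht
    have hxt := hxI t ht
    have hv : HasDerivAt vhat (deriv vhat (x t)) (x t) := (hdiff _ hxt).hasDerivAt
    have hcomp := hv.comp t (hx t ht)
    have h1 : HasDerivAt (fun s => (c + lam) * vhat (x s) + lam)
        ((c + lam) * (deriv vhat (x t) *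
          -(((c + lam) * vhat (x t) + lam) / (a * (k - 1) * vhat (x t))) ^ (1 / k))) t :=
      (hcomp.const_mul (c + lam)).add_const lam
    convert h1 using 1
    set y := x t with hy
    have hvneg := hneg y hxt
    have hvpos := hpos y hxt
    have hvne : vhat y ≠ 0 := ne_of_lt hvneg
    set R : ℝ := ((c + lam) * vhat y + lam) / (a * (k - 1) * vhat y) with hR
    have hRpos : 0 < R := by
      apply div_pos hvpos
      have h1k : 0 < 1 - k := by linarith
      have hmv : 0 < -vhat y := by linarith
      nlinarith [mul_pos (mul_pos ha h1k) hmv]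
    have hode := hODE y hxt
    have hder : deriv vhat y = -(vhat y) * (a * k * R ^ ((k - 1) / k)) := by
      have h2 : a * k * R ^ ((k - 1) / k) * vhat y = -(deriv vhat y) := by
        rw [hode]; field_simp
      linarith [h2]
    have hRcomb : R ^ ((k - 1) / k) * R ^ (1 / k) = R := by
      have he : (k - 1) / k + 1 / k = 1 := by field_simp; ring
      rw [← Real.rpow_add hRpos, he, Real.rpow_one]
    have key : deriv vhat y * -(R ^ (1 / k)) = a * k * (vhat y * R) :=
      calc deriv vhat y * -(R ^ (1 / k))
          = vhat y * (a * k) * (R ^ ((k - 1) / k) * R ^ (1 / k)) := by rw [hder]; ring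
        _ = a * k * (vhat y * R) := by rw [hRcomb]; ring
    have hvR : vhat y * R = ((c + lam) * vhat y + lam) / (a * (k - 1)) := by
      rw [hR]; field_simp
    rw [key, hvR, hD]
    field_simp
  intro t ht
  refine ⟨hw t ht, ?_⟩
  -- Step 2: exponential formula via constancy of w(s)·exp(−D s)
  have hg : ∀ s ∈ Set.Ico (0:ℝ) T,
      HasDerivAt (fun s => ((c + lam) * vhat (x s) + lam) * Real.exp (-(D * s))) 0 s := by
    intro s hs
    have h1 := hw s hs
    have h2 : HasDerivAt (fun s : ℝ => Real.exp (-(D * s))) (-D * Real.exp (-(D * s))) s := by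
      have := (Real.hasDerivAt_exp (-(D * s))).comp s
        (((hasDerivAt_id s).const_mul D).neg)
      exact this.congr_deriv (by ring)
    have h3 := h1.mul h2
    refine h3.congr_deriv ?_
    ring
  have hsub : Set.Icc (0:ℝ) t ⊆ Set.Ico 0 T := fun s hs => ⟨hs.1, lt_of_le_of_lt hs.2 ht.2⟩
  have hcont : ContinuousOn
      (fun s => ((c + lam) * vhat (x s) + lam) * Real.exp (-(D * s))) (Set.Icc 0 t) :=
    fun s hs => ((hg s (hsub hs)).continuousAt).continuousWithinAt
  have hconst := constant_of_has_deriv_right_zero hcont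
    (fun s hs => ((hg s (hsub (Set.Ico_subset_Icc_self hs))).hasDerivWithinAt))
  have heq := hconst t ⟨ht.1, le_refl t⟩
  simp only [mul_zero, neg_zero, Real.exp_zero, mul_one] at heq
  have hexp : Real.exp (-(D * t)) = (Real.exp (D * t))⁻¹ := Real.exp_neg _
  rw [hexp] at heq
  have hne : Real.exp (D * t) ≠ 0 := Real.exp_ne_zero _
  have hwt : (c + lam) * vhat (x t) + lam =
      ((c + lam) * vhat (x 0) + lam) * Real.exp (D * t) := by
    field_simp at heq
    linarith [heq]
  rw [hwt]
  congr 1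
  rw [hD]
  ring
end
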